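/- Suppose there is n̄ ∈ ℕ such that Ω_{n+1} ⊆ Ω_n for all n ≥ n̄. Then for all n ≥ n̄ and all k ∈ ℕ, Y_{cl,n,k} ⊆ Y_{cl,n+1,k}. -/

import Mathlib

open Matrix Pointwise Filter

/-- Pontryagin difference of sets: `A ⊖ B = {z | z + v ∈ A for all v ∈ B}`. -/
def pDiff {d : ℕ} (A B : Set (Fin d → ℝ)) : Set (Fin d → ℝ) :=
  {z | ∀ v ∈ B, z + v ∈ A}

/-- `ℰˣ(n,k) = ⊕_{i=0}^{k-1} (A_cl^{k-1-i} B_w)·Ω_{n+i}` (Minkowski sum of linear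
images), with the empty sum `ℰˣ(n,0) = {0}`. -/
def calEx {nx ne : ℕ} (Acl : Matrix (Fin nx) (Fin nx) ℝ)
    (Bw : Matrix (Fin nx) (Fin ne) ℝ) (Ω : ℕ → Set (Fin ne → ℝ)) (n k : ℕ) :
    Set (Fin nx → ℝ) :=
  ∑ i ∈ Finset.range k, (Acl ^ (k - 1 - i) * Bw).mulVec '' Ω (n + i)

/-- `ℰʸ(n,k) = D_w·Ω_{n+k} ⊕ C_cl·ℰˣ(n,k)`. -/
def calEy {nx ne ny : ℕ} (Acl : Matrix (Fin nx) (Fin nx) ℝ)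
    (Bw : Matrix (Fin nx) (Fin ne) ℝ) (Ccl : Matrix (Fin ny) (Fin nx) ℝ)
    (Dw : Matrix (Fin ny) (Fin ne) ℝ) (Ω : ℕ → Set (Fin ne → ℝ)) (n k : ℕ) :
    Set (Fin ny → ℝ) :=
  Dw.mulVec '' Ω (n + k) + Ccl.mulVec '' calEx Acl Bw Ω n k

/-- `Y_{cl,n,k} = Y_cl ⊖ ℰʸ(n,k)`. -/
def Yclset {nx ne ny : ℕ} (Acl : Matrix (Fin nx) (Fin nx) ℝ)
    (Bw : Matrix (Fin nx) (Fin ne) ℝ) (Ccl : Matrix (Fin ny) (Fin nx) ℝ)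
    (Dw : Matrix (Fin ny) (Fin ne) ℝ) (Ycl : Set (Fin ny → ℝ))
    (Ω : ℕ → Set (Fin ne → ℝ)) (n k : ℕ) : Set (Fin ny → ℝ) :=
  pDiff Ycl (calEy Acl Bw Ccl Dw Ω n k)

/-- `H^y_k = D_cl + C_cl (I − A_cl)⁻¹ (I − A_cl^k) B_cl`. -/
noncomputable def Hy {nx nv ny : ℕ} (Acl : Matrix (Fin nx) (Fin nx) ℝ)
    (Bcl : Matrix (Fin nx) (Fin nv) ℝ) (Ccl : Matrix (Fin ny) (Fin nx) ℝ)
    (Dcl : Matrix (Fin ny) (Fin nv) ℝ) (k : ℕ) : Matrix (Fin ny) (Fin nv) ℝ :=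
  Dcl + Ccl * (1 - Acl)⁻¹ * (1 - Acl ^ k) * Bcl

/-- `H^y_∞ = D_cl + C_cl (I − A_cl)⁻¹ B_cl`. -/
noncomputable def Hyinf {nx nv ny : ℕ} (Acl : Matrix (Fin nx) (Fin nx) ℝ)
    (Bcl : Matrix (Fin nx) (Fin nv) ℝ) (Ccl : Matrix (Fin ny) (Fin nx) ℝ)
    (Dcl : Matrix (Fin ny) (Fin nv) ℝ) : Matrix (Fin ny) (Fin nv) ℝ :=
  Dcl + Ccl * (1 - Acl)⁻¹ * Bcl

/-- `Õ_{∞,n} = {(v, x̂) : H^y_∞ v ∈ Ỹ_n and H^y_k v + C_cl A_cl^k x̂ ∈ Y_{cl,n,k} ∀k}`. -/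
def Otilde {nx nv ne ny : ℕ} (Acl : Matrix (Fin nx) (Fin nx) ℝ)
    (Bcl : Matrix (Fin nx) (Fin nv) ℝ) (Bw : Matrix (Fin nx) (Fin ne) ℝ)
    (Ccl : Matrix (Fin ny) (Fin nx) ℝ) (Dcl : Matrix (Fin ny) (Fin nv) ℝ)
    (Dw : Matrix (Fin ny) (Fin ne) ℝ) (Ycl : Set (Fin ny → ℝ))
    (Ω : ℕ → Set (Fin ne → ℝ)) (Ytil : ℕ → Set (Fin ny → ℝ)) (n : ℕ) :
    Set ((Fin nv → ℝ) × (Fin nx → ℝ)) :=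
  {p | (Hyinf Acl Bcl Ccl Dcl).mulVec p.1 ∈ Ytil n ∧
       ∀ k : ℕ, (Hy Acl Bcl Ccl Dcl k).mulVec p.1 + (Ccl * Acl ^ k).mulVec p.2 ∈
         Yclset Acl Bw Ccl Dw Ycl Ω n k}

/-- If there is `n̄` such that `Ω_{n+1} ⊆ Ω_n` for all `n ≥ n̄`,
then for all `n ≥ n̄` and all `k`, `Y_{cl,n,k} ⊆ Y_{cl,n+1,k}`. -/
lemma sumsub {d:ℕ} (f g : ℕ → Set (Fin d → ℝ)) (s : Finset ℕ) (h : ∀ i ∈ s, f i ⊆ g i) :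
    ∑ i ∈ s, f i ⊆ ∑ i ∈ s, g i := by
  induction s using Finset.induction with
  | empty => simp
  | insert a s hn ih =>
    rw [Finset.sum_insert hn, Finset.sum_insert hn]
    exact Set.add_subset_add (h a (Finset.mem_insert_self a s))
      (ih fun i hi => h i (Finset.mem_insert_of_mem hi))

theorem stmt_11 {nx ne ny : ℕ} (Acl : Matrix (Fin nx) (Fin nx) ℝ)
    (Bw : Matrix (Fin nx) (Fin ne) ℝ) (Ccl : Matrix (Fin ny) (Fin nx) ℝ)
    (Dw : Matrix (Fin ny) (Fin ne) ℝ) (Ycl : Set (Fin ny → ℝ))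
    (Ω : ℕ → Set (Fin ne → ℝ))
    (nbar : ℕ) (hΩ : ∀ n, nbar ≤ n → Ω (n + 1) ⊆ Ω n) :
    ∀ n, nbar ≤ n → ∀ k : ℕ,
      Yclset Acl Bw Ccl Dw Ycl Ω n k ⊆ Yclset Acl Bw Ccl Dw Ycl Ω (n + 1) k := by
  intro n hn k
  have hmono : ∀ m, n ≤ m → Ω (m + 1) ⊆ Ω m := fun m hm => hΩ m (le_trans hn hm)
  have hEx : calEx Acl Bw Ω (n + 1) k ⊆ calEx Acl Bw Ω n k := by
    apply sumsub
    intro i hi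
    apply Set.image_mono
    have : n + 1 + i = (n + i) + 1 := by ring
    rw [this]
    exact hmono (n + i) (Nat.le_add_right n i)
  have hEy : calEy Acl Bw Ccl Dw Ω (n + 1) k ⊆ calEy Acl Bw Ccl Dw Ω n k := by
    apply Set.add_subset_add
    · apply Set.image_mono
      have : n + 1 + k = (n + k) + 1 := by ring
      rw [this]
      exact hmono (n + k) (Nat.le_add_right n k)
    · exact Set.image_mono hEx
  intro z hz v hv
  exact hz v (hEy hv)
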